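/- Let w be any complex root of the polynomial X^7 + 5X^6 + 2X^3 − X^2 + X + 11. Then the set of irreducible λ-quiddities over ⟨w⟩ is exactly {(0, kw, 0, −kw) : k ∈ ℤ} ∪ {(kw, 0, −kw, 0) : k ∈ ℤ}. -/

import Mathlib

open Matrix Polynomial

noncomputable section

/-- The elementary matrix [[a, -1], [1, 0]]. -/
def matE (a : ℂ) : Matrix (Fin 2) (Fin 2) ℂ := !![a, -1; 1, 0]

/-- M_n(a_1, …, a_n) = matE a_n * matE a_{n-1} * ⋯ * matE a_1, for the list [a_1, …, a_n]. -/
def Mlist (l : List ℂ) : Matrix (Fin 2) (Fin 2) ℂ := (l.reverse.map matE).prod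

/-- A λ-quiddity over R : a nonempty tuple of elements of R with M_n(a_1,…,a_n) = ±Id. -/
def IsQuiddity (R : Set ℂ) (l : List ℂ) : Prop :=
  l ≠ [] ∧ (∀ x ∈ l, x ∈ R) ∧ (Mlist l = 1 ∨ Mlist l = -1)

/-- (a_1,…,a_n) ⊕ (b_1,…,b_m) := (a_1+b_m, a_2,…,a_{n-1}, a_n+b_1, b_2,…,b_{m-1}). -/
def oplus (a b : List ℂ) : List ℂ :=
  (a.headI + b.getLastD 0) ::
    (a.tail.dropLast ++ (a.getLastD 0 + b.headI) :: b.tail.dropLast)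

/-- b is obtained from a by a cyclic permutation of a or of the reversal of a. -/
def CyclicEquiv (a b : List ℂ) : Prop :=
  (∃ k, b = a.rotate k) ∨ (∃ k, b = a.reverse.rotate k)

/-- A λ-quiddity c over R is reducible if c ∼ (a_1,…,a_m) ⊕ (b_1,…,b_l) with
(a_1,…,a_m) a tuple of elements of R, (b_1,…,b_l) a λ-quiddity over R, m ≥ 3 and l ≥ 3. -/
def ReducibleQuiddity (R : Set ℂ) (c : List ℂ) : Prop :=
  ∃ a b : List ℂ, (∀ x ∈ a, x ∈ R) ∧ IsQuiddity R b ∧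
    3 ≤ a.length ∧ 3 ≤ b.length ∧ CyclicEquiv c (oplus a b)

/-- The irreducible λ-quiddities over R : the λ-quiddities of size ≥ 3 which are not
reducible (those of size < 3, i.e. (0,0), are by convention not irreducible). -/
def IrreducibleQuiddity (R : Set ℂ) (c : List ℂ) : Prop :=
  IsQuiddity R c ∧ 3 ≤ c.length ∧ ¬ ReducibleQuiddity R c

/-- The subgroup ⟨w⟩ = {kw : k ∈ ℤ} of (ℂ, +), as a set. -/
def subgroupGen (w : ℂ) : Set ℂ := {x | ∃ k : ℤ, x = (k : ℂ) * w}

end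

/-! ### Auxiliary material -/

noncomputable section AuxStmt10

/-! #### Matrix computations -/

lemma aux_Mlist_cons (x : ℂ) (l : List ℂ) : Mlist (x :: l) = Mlist l * matE x := by
  simp [Mlist, List.prod_append]

lemma aux_Mlist3 (x y z : ℂ) :
    Mlist [x, y, z] = !![z*(y*x-1)-x, 1-z*y; y*x-1, -y] := by
  simp only [Mlist, List.reverse, List.map, List.prod_cons, List.prod_nil, matE]
  simp [Matrix.mul_fin_two, Matrix.one_fin_two, matE]
  ring_nf
  simp

lemma aux_Mlist4 (x y z t : ℂ) :
    Mlist [x, y, z, t] =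
      !![(t*z-1)*(y*x-1)-t*x, t*(1-z*y)+y; z*(y*x-1)-x, 1-z*y] := by
  rw [show [x,y,z,t] = x :: [y,z,t] from rfl, aux_Mlist_cons, aux_Mlist3, matE]
  rw [Matrix.mul_fin_two]
  congr 1 <;> ring

lemma aux_quid1 (t : ℂ) : Mlist [0, t, 0, -t] = 1 := by
  rw [aux_Mlist4, Matrix.one_fin_two]
  congr 1 <;> ring

lemma aux_quid2 (t : ℂ) : Mlist [t, 0, -t, 0] = 1 := by
  rw [aux_Mlist4, Matrix.one_fin_two]
  congr 1 <;> ring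

/-! #### Large entries give no λ-quiddities -/

lemma aux_norm_Mlist_big : ∀ (l : List ℂ), l ≠ [] → (∀ x ∈ l, 2 ≤ ‖x‖) →
    ‖Mlist l 0 1‖ < ‖Mlist l 0 0‖ ∧ 1 ≤ ‖Mlist l 0 1‖ := by
  intro l
  induction l with
  | nil => intro h; exact absurd rfl h
  | cons x l ih =>
    intro _ hmem
    have hx : 2 ≤ ‖x‖ := hmem x List.mem_cons_self
    rcases eq_or_ne l [] with rfl | hl
    · have : Mlist [x] = matE x := by simp [Mlist]
      rw [this]
      have ha : (!![x, -1; 1, 0] : Matrix (Fin 2) (Fin 2) ℂ) 0 0 = x := by simp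
      have hb : (!![x, -1; 1, 0] : Matrix (Fin 2) (Fin 2) ℂ) 0 1 = -1 := by simp
      rw [matE, ha, hb, norm_neg, norm_one]
      exact ⟨lt_of_lt_of_le one_lt_two hx, le_refl 1⟩
    · obtain ⟨h1, h2⟩ := ih hl (fun y hy => hmem y (List.mem_cons_of_mem x hy))
      have e0 : Mlist (x :: l) 0 0 = Mlist l 0 0 * x + Mlist l 0 1 := by
        rw [aux_Mlist_cons]
        simp [Matrix.mul_apply, Fin.sum_univ_two, matE]
      have e1 : Mlist (x :: l) 0 1 = -(Mlist l 0 0) := by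
        rw [aux_Mlist_cons]
        simp [Matrix.mul_apply, Fin.sum_univ_two, matE]
      rw [e0, e1, norm_neg]
      set A := Mlist l 0 0
      set B := Mlist l 0 1
      have hAB : ‖A * x‖ - ‖B‖ ≤ ‖A * x + B‖ := by
        have := norm_sub_norm_le (A * x) (-B)
        simpa using this
      have hAx : ‖A * x‖ = ‖A‖ * ‖x‖ := norm_mul A x
      constructor
      · nlinarith [norm_nonneg A, norm_nonneg B]
      · linarith

lemma aux_Mlist_ne_pm_one (l : List ℂ) (hne : l ≠ []) (h : ∀ x ∈ l, 2 ≤ ‖x‖) :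
    ¬ (Mlist l = 1 ∨ Mlist l = -1) := by
  obtain ⟨h1, h2⟩ := aux_norm_Mlist_big l hne h
  rintro (hM | hM) <;> rw [hM] at h2 <;> simp [Matrix.one_apply] at h2 <;> linarith

/-! #### The polynomial -/

def pZ : ℤ[X] := X^7 + 5*X^6 + 2*X^3 - X^2 + X + 11

def pQ : ℚ[X] := X^7 + 5*X^6 + 2*X^3 - X^2 + X + 11

lemma pQ_eq_map : pQ = pZ.map (Int.castRingHom ℚ) := by
  simp [pZ, pQ, Polynomial.map_add, Polynomial.map_sub, Polynomial.map_mul,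
    Polynomial.map_pow, Polynomial.map_ofNat]

lemma pZ_monic : pZ.Monic := by unfold pZ; monicity!

lemma pQ_monic : pQ.Monic := by unfold pQ; monicity!

lemma pZ_natDegree : pZ.natDegree = 7 := by unfold pZ; compute_degree!

lemma root_big {z : ℂ} (hz : z^7 + 5*z^6 + 2*z^3 - z^2 + z + 11 = 0) : 1 < ‖z‖ := by
  by_contra h
  push_neg at h
  have h1 : (11 : ℂ) = -(z^7 + 5*z^6 + 2*z^3 - z^2 + z) := by
    linear_combination hz
  have hb : ‖z^7 + 5*z^6 + 2*z^3 - z^2 + z‖ ≤ 10 := by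
    have h7 : ‖z^7‖ ≤ 1 := by rw [norm_pow]; exact pow_le_one₀ (norm_nonneg z) h
    have h6 : ‖(5:ℂ)*z^6‖ ≤ 5 := by
      rw [norm_mul, norm_pow]
      have : ‖z‖^6 ≤ 1 := pow_le_one₀ (norm_nonneg z) h
      have h5 : ‖(5:ℂ)‖ = 5 := by norm_num
      nlinarith
    have h3 : ‖(2:ℂ)*z^3‖ ≤ 2 := by
      rw [norm_mul, norm_pow]
      have : ‖z‖^3 ≤ 1 := pow_le_one₀ (norm_nonneg z) h
      have h5 : ‖(2:ℂ)‖ = 2 := by norm_num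
      nlinarith
    have h2 : ‖z^2‖ ≤ 1 := by rw [norm_pow]; exact pow_le_one₀ (norm_nonneg z) h
    calc ‖z^7 + 5*z^6 + 2*z^3 - z^2 + z‖
        ≤ ‖z^7 + 5*z^6 + 2*z^3 - z^2‖ + ‖z‖ := norm_add_le _ _
      _ ≤ (‖z^7 + 5*z^6 + 2*z^3‖ + ‖z^2‖) + ‖z‖ := by
          gcongr ?_ + _; exact norm_sub_le _ _
      _ ≤ ((‖z^7 + 5*z^6‖ + ‖(2:ℂ)*z^3‖) + ‖z^2‖) + ‖z‖ := by
          gcongr ?_ + _ + _; exact norm_add_le _ _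
      _ ≤ (((‖z^7‖ + ‖(5:ℂ)*z^6‖) + ‖(2:ℂ)*z^3‖) + ‖z^2‖) + ‖z‖ := by
          gcongr ?_ + _ + _ + _; exact norm_add_le _ _
      _ ≤ 10 := by linarith
  have h11 : ‖(11:ℂ)‖ = 11 := by norm_num
  rw [h1, norm_neg] at h11
  linarith

lemma eval_map_pZ (z : ℂ) : (pZ.map (Int.castRingHom ℂ)).eval z
    = z^7 + 5*z^6 + 2*z^3 - z^2 + z + 11 := by
  simp [pZ, Polynomial.map_add, Polynomial.map_sub, Polynomial.map_mul,
    Polynomial.map_pow, Polynomial.map_ofNat]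

lemma one_le_multiset_prod (s : Multiset ℝ) (h : ∀ x ∈ s, 1 ≤ x) : 1 ≤ s.prod := by
  induction s using Multiset.induction_on with
  | empty => simp
  | cons a s ih =>
    rw [Multiset.prod_cons]
    have ha := h a (Multiset.mem_cons_self a s)
    have hs := ih (fun x hx => h x (Multiset.mem_cons_of_mem hx))
    nlinarith

lemma norm_multiset_prod' (s : Multiset ℂ) : ‖s.prod‖ = (s.map (fun z => ‖z‖)).prod := by
  induction s using Multiset.induction_on with
  | empty => simp
  | cons a s ih => simp [Multiset.prod_cons, norm_mul, ih]

lemma abs_coeff_zero_big (f : ℤ[X]) (hdeg : 1 ≤ f.natDegree)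
    (hlc : f.leadingCoeff = 1 ∨ f.leadingCoeff = -1)
    (hroots : ∀ z : ℂ, (f.map (Int.castRingHom ℂ)).eval z = 0 → 1 < ‖z‖) :
    2 ≤ |f.coeff 0| := by
  set F : ℂ[X] := f.map (Int.castRingHom ℂ) with hF
  have hf0 : f ≠ 0 := by
    intro h; rw [h] at hdeg; simp at hdeg
  have hFdeg : F.natDegree = f.natDegree := by
    apply Polynomial.natDegree_map_eq_of_injective
    exact Int.cast_injective
  have hF0 : F ≠ 0 := by
    intro h
    have := hFdeg; rw [h] at this; simp at this; omega
  have hsplit : Splits F := IsAlgClosed.splits F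
  have hcard : F.roots.card = F.natDegree := (Polynomial.splits_iff_card_roots).mp hsplit
  have hprod := hsplit.eq_prod_roots
  have heval : F.eval 0 = F.leadingCoeff * (F.roots.map (fun a => -a)).prod := by
    conv_lhs => rw [hprod]
    rw [Polynomial.eval_mul, Polynomial.eval_C, Polynomial.eval_multiset_prod]
    congr 1
    rw [Multiset.map_map]
    congr 1
    apply Multiset.map_congr rfl
    intro a _
    simp
  have hlcF : ‖F.leadingCoeff‖ = 1 := by
    have : F.leadingCoeff = ((f.leadingCoeff : ℂ)) := by
      rw [hF]
      rw [Polynomial.leadingCoeff_map_of_leadingCoeff_ne_zero]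
      · simp
      · rcases hlc with h | h <;> rw [h] <;> norm_num
    rw [this]
    rcases hlc with h | h <;> rw [h] <;> norm_num
  have hbig : 1 < ‖F.eval 0‖ := by
    rw [heval, norm_mul, hlcF, one_mul, norm_multiset_prod']
    have hallge : ∀ x ∈ (F.roots.map (fun a => -a)).map (fun z : ℂ => ‖z‖), 1 ≤ x := by
      intro x hx
      simp only [Multiset.mem_map] at hx
      obtain ⟨z, ⟨r, hr, rfl⟩, rfl⟩ := hx
      have : 1 < ‖r‖ := hroots r ((Polynomial.mem_roots hF0).mp hr)
      rw [norm_neg]; linarith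
    have hne : F.roots ≠ 0 := by
      intro h
      rw [h] at hcard
      simp [hFdeg] at hcard
      omega
    obtain ⟨r, hr⟩ := Multiset.exists_mem_of_ne_zero hne
    obtain ⟨s, hrs⟩ := Multiset.exists_cons_of_mem hr
    rw [hrs, Multiset.map_cons, Multiset.map_cons, Multiset.prod_cons]
    have h1 : 1 < ‖-r‖ := by
      rw [norm_neg]
      exact hroots r ((Polynomial.mem_roots hF0).mp hr)
    have h2 : 1 ≤ ((s.map (fun a => -a)).map (fun z : ℂ => ‖z‖)).prod := by
      apply one_le_multiset_prod
      intro x hx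
      apply hallge
      rw [hrs, Multiset.map_cons, Multiset.map_cons]
      exact Multiset.mem_cons_of_mem hx
    nlinarith
  have hev : F.eval 0 = ((f.coeff 0 : ℂ)) := by
    rw [hF]
    rw [Polynomial.eval_map, Polynomial.eval₂_at_zero]
    simp
  rw [hev] at hbig
  have : ‖((f.coeff 0 : ℤ) : ℂ)‖ = |(f.coeff 0 : ℝ)| := by
    rw [show ((f.coeff 0 : ℤ) : ℂ) = ((f.coeff 0 : ℝ) : ℂ) by push_cast; ring]
    exact Complex.norm_real _
  rw [this] at hbig
  have : (1:ℝ) < |(f.coeff 0 : ℤ)| := by exact_mod_cast hbig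
  exact_mod_cast this

lemma pZ_coeff_zero : pZ.coeff 0 = 11 := by
  unfold pZ
  simp

lemma pZ_irreducible : Irreducible pZ := by
  constructor
  · intro h
    have hdeg := Polynomial.degree_eq_zero_of_isUnit h
    have : pZ.natDegree = 0 := Polynomial.natDegree_eq_zero_iff_degree_le_zero.mpr (le_of_eq hdeg)
    rw [pZ_natDegree] at this
    omega
  · intro f g hfg
    have hlc : f.leadingCoeff * g.leadingCoeff = 1 := by
      have := pZ_monic
      rw [hfg] at this
      rw [Polynomial.Monic, Polynomial.leadingCoeff_mul] at this
      exact this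
    have hlcs : (f.leadingCoeff = 1 ∧ g.leadingCoeff = 1) ∨
        (f.leadingCoeff = -1 ∧ g.leadingCoeff = -1) := Int.mul_eq_one_iff_eq_one_or_neg_one.mp hlc
    by_cases hf : f.natDegree = 0
    · left
      have : f = C (f.coeff 0) := Polynomial.eq_C_of_natDegree_eq_zero hf
      rw [this]
      apply Polynomial.isUnit_C.mpr
      have hlcf : f.coeff 0 = f.leadingCoeff := by
        rw [Polynomial.leadingCoeff, hf]
      rcases hlcs with ⟨h1, _⟩ | ⟨h1, _⟩ <;> rw [hlcf, h1] <;> norm_num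
    by_cases hg : g.natDegree = 0
    · right
      have : g = C (g.coeff 0) := Polynomial.eq_C_of_natDegree_eq_zero hg
      rw [this]
      apply Polynomial.isUnit_C.mpr
      have hlcg : g.coeff 0 = g.leadingCoeff := by
        rw [Polynomial.leadingCoeff, hg]
      rcases hlcs with ⟨_, h1⟩ | ⟨_, h1⟩ <;> rw [hlcg, h1] <;> norm_num
    exfalso
    have key : ∀ z : ℂ, ((pZ.map (Int.castRingHom ℂ))).eval z = 0 → 1 < ‖z‖ := by
      intro z hz
      rw [eval_map_pZ] at hz
      exact root_big hz
    have hrf : ∀ z : ℂ, (f.map (Int.castRingHom ℂ)).eval z = 0 → 1 < ‖z‖ := by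
      intro z hz
      apply key
      rw [hfg, Polynomial.map_mul, Polynomial.eval_mul, hz, zero_mul]
    have hrg : ∀ z : ℂ, (g.map (Int.castRingHom ℂ)).eval z = 0 → 1 < ‖z‖ := by
      intro z hz
      apply key
      rw [hfg, Polynomial.map_mul, Polynomial.eval_mul, hz, mul_zero]
    have hf2 : 2 ≤ |f.coeff 0| :=
      abs_coeff_zero_big f (by omega) (by rcases hlcs with ⟨h1,_⟩|⟨h1,_⟩ <;> [left; right] <;> exact h1) hrf
    have hg2 : 2 ≤ |g.coeff 0| :=
      abs_coeff_zero_big g (by omega) (by rcases hlcs with ⟨_,h1⟩|⟨_,h1⟩ <;> [left; right] <;> exact h1) hrg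
    have h11 : f.coeff 0 * g.coeff 0 = 11 := by
      have := pZ_coeff_zero
      rw [hfg, Polynomial.mul_coeff_zero] at this
      exact this
    have habs : |f.coeff 0| * |g.coeff 0| = 11 := by
      rw [← abs_mul, h11]; norm_num
    have hdvd : |f.coeff 0| ∣ 11 := ⟨|g.coeff 0|, habs.symm⟩
    have hle : |f.coeff 0| ≤ 11 := Int.le_of_dvd (by norm_num) hdvd
    interval_cases h : |f.coeff 0| <;> omega

lemma pQ_irreducible : Irreducible pQ := by
  rw [pQ_eq_map]
  exact (pZ_monic.irreducible_iff_irreducible_map_fraction_map).mp pZ_irreducible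

lemma transfer_root {u v : ℂ} (hu : aeval u pQ = 0) (hv : aeval v pQ = 0)
    {P : ℚ[X]} (hP : aeval u P = 0) : aeval v P = 0 := by
  have hmin : minpoly ℚ u = pQ :=
    (minpoly.eq_of_irreducible_of_monic pQ_irreducible hu pQ_monic).symm
  have hdvd : pQ ∣ P := by
    rw [← hmin]
    exact minpoly.dvd ℚ u hP
  obtain ⟨Q, rfl⟩ := hdvd
  rw [_root_.map_mul, hv, zero_mul]

lemma exists_real_root : ∃ w₀ : ℝ, w₀ ≤ -2 ∧ aeval ((w₀ : ℂ)) pQ = 0 := by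
  have hcont : ContinuousOn (fun x : ℝ => x^7 + 5*x^6 + 2*x^3 - x^2 + x + 11) (Set.Icc (-6) (-2)) := by
    fun_prop
  have hivt := intermediate_value_Icc (by norm_num : (-6:ℝ) ≤ -2) hcont
  have h0mem : (0:ℝ) ∈ Set.Icc ((-6:ℝ)^7 + 5*(-6)^6 + 2*(-6)^3 - (-6)^2 + (-6) + 11)
      ((-2:ℝ)^7 + 5*(-2)^6 + 2*(-2)^3 - (-2)^2 + (-2) + 11) := by
    constructor <;> norm_num
  obtain ⟨x, hx, hfx⟩ := hivt h0mem
  refine ⟨x, hx.2, ?_⟩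
  have heq : aeval ((x:ℝ) : ℂ) pQ = ((x^7 + 5*x^6 + 2*x^3 - x^2 + x + 11 : ℝ) : ℂ) := by
    simp only [pQ, map_add, map_sub, _root_.map_mul, map_pow, aeval_X, map_ofNat]
    push_cast
    ring
  rw [heq]
  exact_mod_cast hfx

/-! #### Transfer of matrix identities between conjugate roots -/

def PM (ks : List ℤ) : Matrix (Fin 2) (Fin 2) ℚ[X] :=
  (ks.reverse.map (fun k : ℤ => !![C (k:ℚ) * X, -1; 1, 0])).prod

lemma PM_eval (z : ℂ) (ks : List ℤ) :
    (PM ks).map (aeval z : ℚ[X] → ℂ) = Mlist (ks.map (fun k : ℤ => (k:ℂ) * z)) := by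
  set φ := (aeval z : ℚ[X] →ₐ[ℚ] ℂ).toRingHom with hφ
  have h1 : (PM ks).map (aeval z : ℚ[X] → ℂ) = φ.mapMatrix (PM ks) := rfl
  rw [h1, PM, map_list_prod, List.map_map]
  have h2 : (⇑φ.mapMatrix ∘ fun k : ℤ => !![C (k:ℚ) * X, -1; 1, 0])
      = fun k : ℤ => matE ((k:ℂ) * z) := by
    funext k
    ext i j
    fin_cases i <;> fin_cases j <;>
      simp [matE, hφ, RingHom.mapMatrix_apply, Matrix.map_apply]
  rw [h2, Mlist]
  congr 1
  rw [← List.map_reverse, List.map_map]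
  simp [Function.comp]

lemma transfer_entry {u v : ℂ} (htr : ∀ P : ℚ[X], aeval u P = 0 → aeval v P = 0)
    (q : ℚ[X]) (c : ℚ) (h : aeval u q = algebraMap ℚ ℂ c) : aeval v q = algebraMap ℚ ℂ c := by
  have h0 : aeval u (q - C c) = 0 := by
    rw [map_sub, aeval_C, h, sub_self]
  have h1 := htr _ h0
  rw [map_sub, aeval_C, sub_eq_zero] at h1
  exact h1

lemma one_eq_map : (1 : Matrix (Fin 2) (Fin 2) ℂ) = (1 : Matrix (Fin 2) (Fin 2) ℚ).map (algebraMap ℚ ℂ) := by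
  ext i j
  fin_cases i <;> fin_cases j <;> simp [Matrix.one_apply, Matrix.map_apply]

lemma neg_one_eq_map : (-1 : Matrix (Fin 2) (Fin 2) ℂ) = (-1 : Matrix (Fin 2) (Fin 2) ℚ).map (algebraMap ℚ ℂ) := by
  ext i j
  fin_cases i <;> fin_cases j <;> simp [Matrix.one_apply, Matrix.map_apply]

lemma Mlist_transfer_aux {u v : ℂ} (htr : ∀ P : ℚ[X], aeval u P = 0 → aeval v P = 0)
    (ks : List ℤ) (E : Matrix (Fin 2) (Fin 2) ℚ)
    (hE : Mlist (ks.map (fun k : ℤ => (k:ℂ) * u)) = E.map (algebraMap ℚ ℂ)) :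
    Mlist (ks.map (fun k : ℤ => (k:ℂ) * v)) = E.map (algebraMap ℚ ℂ) := by
  rw [← PM_eval] at hE ⊢
  ext i j
  have h1 : aeval u (PM ks i j) = algebraMap ℚ ℂ (E i j) := by
    have := congrFun (congrFun hE i) j
    simpa [Matrix.map_apply] using this
  have h2 := transfer_entry htr _ _ h1
  simpa [Matrix.map_apply] using h2

lemma Mlist_transfer {u v : ℂ} (htr : ∀ P : ℚ[X], aeval u P = 0 → aeval v P = 0)
    (ks : List ℤ) (hM : Mlist (ks.map (fun k : ℤ => (k:ℂ) * u)) = 1 ∨ Mlist (ks.map (fun k : ℤ => (k:ℂ) * u)) = -1) :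
    Mlist (ks.map (fun k : ℤ => (k:ℂ) * v)) = 1 ∨ Mlist (ks.map (fun k : ℤ => (k:ℂ) * v)) = -1 := by
  rcases hM with h | h
  · left
    rw [one_eq_map] at h ⊢
    exact Mlist_transfer_aux htr ks 1 h
  · right
    rw [neg_one_eq_map] at h ⊢
    exact Mlist_transfer_aux htr ks (-1) h

/-! #### List lemmas -/

lemma aux_length_eq_four {l : List ℂ} (h : l.length = 4) : ∃ a b c d, l = [a, b, c, d] := by
  rcases l with _ | ⟨a, l⟩; · simp at h
  rcases l with _ | ⟨b, l⟩; · simp at h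
  rcases l with _ | ⟨c, l⟩; · simp at h
  rcases l with _ | ⟨d, l⟩; · simp at h
  rcases l with _ | ⟨e, l⟩
  · exact ⟨a, b, c, d, rfl⟩
  · simp at h

lemma exists_intList {w : ℂ} : ∀ {l : List ℂ}, (∀ x ∈ l, x ∈ subgroupGen w) →
    ∃ ks : List ℤ, l = ks.map (fun k : ℤ => (k:ℂ) * w) := by
  intro l
  induction l with
  | nil => intro _; exact ⟨[], rfl⟩
  | cons x l ih =>
    intro h
    obtain ⟨k, hk⟩ := h x List.mem_cons_self
    obtain ⟨ks, hks⟩ := ih (fun y hy => h y (List.mem_cons_of_mem x hy))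
    exact ⟨k :: ks, by rw [List.map_cons, ← hk, ← hks]⟩

lemma oplus_length {a b : List ℂ} (ha : 2 ≤ a.length) (hb : 2 ≤ b.length) :
    (oplus a b).length = a.length + b.length - 2 := by
  simp [oplus]
  omega

lemma cyclicEquiv_length {a b : List ℂ} (h : CyclicEquiv a b) : a.length = b.length := by
  rcases h with ⟨k, rfl⟩ | ⟨k, rfl⟩ <;> simp

/-! #### Reducibility of long quiddities containing a zero -/

lemma getLast_aux (a lst : ℂ) (mid : List ℂ) : ∀ x : ℂ,
    ((a) :: (mid ++ [lst])).getLastD x = lst := by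
  induction mid generalizing a with
  | nil => intro x; rfl
  | cons b mid ih =>
    intro x
    rw [List.cons_append, List.getLastD_cons]
    exact ih b a

lemma reducible_of_zero {R : Set ℂ} (h0 : (0:ℂ) ∈ R)
    (hadd : ∀ x y : ℂ, x ∈ R → y ∈ R → x + y ∈ R) (hneg : ∀ x : ℂ, x ∈ R → -x ∈ R)
    {c : List ℂ} (hmem : ∀ x ∈ c, x ∈ R) (hlen : 5 ≤ c.length) (hx : (0:ℂ) ∈ c) :
    ReducibleQuiddity R c := by
  obtain ⟨s, u, hc⟩ := List.append_of_mem hx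
  have hrot : c.rotate (s.length + 1) = (u ++ s) ++ [0] := by
    have hsl : s.length + 1 ≤ c.length := by
      rw [hc]; simp
    rw [hc] at hsl ⊢
    rw [List.rotate_eq_drop_append_take hsl]
    rw [List.drop_append, List.take_append]
    have e1 : List.drop (s.length + 1) s = [] := List.drop_eq_nil_of_le (by omega)
    have e2 : List.take (s.length + 1) s = s := List.take_of_length_le (by omega)
    have e3 : s.length + 1 - s.length = 1 := by omega
    rw [e1, e2, e3]
    simp
  set d := u ++ s with hd
  have hdlen : 4 ≤ d.length := by
    rw [hc] at hlen
    simp [hd] at hlen ⊢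
    omega
  obtain ⟨d', t, hd'⟩ : ∃ d' t, d = d' ++ [t] := by
    rcases d.eq_nil_or_concat' with h | ⟨L, b, h⟩
    · rw [h] at hdlen; simp at hdlen
    · exact ⟨L, b, h⟩
  obtain ⟨hd1, tl, htl⟩ : ∃ hd1 tl, d' = hd1 :: tl := by
    rcases d' with _ | ⟨x, l⟩
    · rw [hd'] at hdlen; simp at hdlen
    · exact ⟨x, l, rfl⟩
  obtain ⟨mid, lst, hmid⟩ : ∃ mid lst, tl = mid ++ [lst] := by
    rcases tl.eq_nil_or_concat' with h | ⟨L, b, h⟩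
    · rw [hd', htl, h] at hdlen; simp at hdlen
    · exact ⟨L, b, h⟩
  have hmemd : ∀ x ∈ d, x ∈ R := by
    intro x hxd
    apply hmem
    rw [hc]
    rw [hd] at hxd
    simp at hxd ⊢
    tauto
  have htR : t ∈ R := hmemd t (by rw [hd', htl, hmid]; simp)
  have hhdR : hd1 ∈ R := hmemd hd1 (by rw [hd', htl]; simp)
  have hlstR : lst ∈ R := hmemd lst (by rw [hd', htl, hmid]; simp)
  have hmidR : ∀ x ∈ mid, x ∈ R := by
    intro x hx'
    apply hmemd
    rw [hd', htl, hmid]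
    simp
    tauto
  refine ⟨(hd1 + t) :: (mid ++ [lst]), [0, t, 0, -t], ?_, ?_, ?_, ?_, ?_⟩
  · intro x hx'
    simp at hx'
    rcases hx' with rfl | h | rfl
    · exact hadd _ _ hhdR htR
    · exact hmidR x h
    · exact hlstR
  · refine ⟨by simp, ?_, Or.inl (aux_quid1 t)⟩
    intro x hx'
    simp at hx'
    rcases hx' with rfl | rfl | rfl | rfl
    exacts [h0, htR, h0, hneg _ htR]
  · have hml : d.length = mid.length + 3 := by
      rw [hd', htl, hmid]; simp
    simp only [List.length_cons, List.length_append, List.length_singleton]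
    omega
  · simp
  · left
    refine ⟨s.length + 1, ?_⟩
    rw [hrot, hd', htl, hmid]
    rw [oplus]
    rw [show List.getLastD [0, t, 0, -t] 0 = -t from rfl]
    rw [getLast_aux (hd1 + t) lst mid 0]
    simp [List.dropLast_concat]

end AuxStmt10

theorem stmt10 (w : ℂ)
    (hw : w ^ 7 + 5 * w ^ 6 + 2 * w ^ 3 - w ^ 2 + w + 11 = 0) :
    {c : List ℂ | IrreducibleQuiddity (subgroupGen w) c} =
      {c : List ℂ | ∃ k : ℤ, c = [0, (k : ℂ) * w, 0, -((k : ℂ) * w)]} ∪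
      {c : List ℂ | ∃ k : ℤ, c = [(k : ℂ) * w, 0, -((k : ℂ) * w), 0]} := by
  have hwroot : aeval w pQ = 0 := by
    simp only [pQ, map_add, map_sub, _root_.map_mul, map_pow, aeval_X, map_ofNat]
    exact hw
  obtain ⟨w₀, hw₀le, hw₀root⟩ := exists_real_root
  set v : ℂ := (w₀ : ℂ) with hv
  have htr : ∀ P : ℚ[X], aeval w P = 0 → aeval v P = 0 :=
    fun P hP => transfer_root hwroot hw₀root hP
  have hvnorm : 2 ≤ ‖v‖ := by
    rw [hv, Complex.norm_real, Real.norm_eq_abs, abs_of_nonpos (by linarith)]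
    linarith
  have hkv : ∀ k : ℤ, k ≠ 0 → 2 ≤ ‖(k:ℂ) * v‖ := by
    intro k hk
    rw [norm_mul]
    have h1 : (1:ℝ) ≤ ‖(k:ℂ)‖ := by
      rw [show ((k:ℤ):ℂ) = (((k:ℤ):ℝ):ℂ) by push_cast; ring, Complex.norm_real,
        Real.norm_eq_abs]
      have : (1:ℤ) ≤ |k| := Int.one_le_abs hk
      exact_mod_cast this
    nlinarith [norm_nonneg ((k:ℂ))]
  -- k·w is never ±1
  have hnounit : ∀ k : ℤ, ¬ ((k:ℂ) * w = 1 ∨ (k:ℂ) * w = -1) := by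
    rintro k h
    have hpoly : ∃ c : ℚ, (c = 1 ∨ c = -1) ∧ aeval w (C (k:ℚ) * X - C c) = 0 := by
      rcases h with h | h
      · exact ⟨1, Or.inl rfl, by simp [h]⟩
      · exact ⟨-1, Or.inr rfl, by simp [h]⟩
    obtain ⟨cc, hcc, hev⟩ := hpoly
    have hev' := htr _ hev
    have hkvc : (k:ℂ) * v = algebraMap ℚ ℂ cc := by
      have : aeval v (C (k:ℚ) * X) = aeval v (C cc) := by
        rw [map_sub, sub_eq_zero] at hev'
        exact hev'
      simpa using this
    have hnorm1 : ‖(k:ℂ) * v‖ = 1 := by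
      rw [hkvc]
      rcases hcc with rfl | rfl <;> norm_num
    rcases eq_or_ne k 0 with rfl | hk
    · simp at hnorm1
    · have := hkv k hk
      linarith
  -- k·l·w² is never 2
  have hnotwo : ∀ k l : ℤ, ¬ ((k:ℂ) * w * ((l:ℂ) * w) = 2) := by
    intro k l h
    have hev : aeval w (C ((k:ℚ) * (l:ℚ)) * X^2 - C 2) = 0 := by
      simp only [map_sub, _root_.map_mul, map_pow, aeval_X, aeval_C, map_ofNat,
        _root_.map_intCast]
      linear_combination h
    have hev' := htr _ hev
    have hkvc : ((k*l : ℤ):ℂ) * v^2 = 2 := by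
      simp only [map_sub, _root_.map_mul, map_pow, aeval_X, aeval_C, map_ofNat,
        _root_.map_intCast, sub_eq_zero] at hev'
      rw [show ((k*l : ℤ):ℂ) = (k:ℂ) * (l:ℂ) by push_cast; ring]
      exact hev'
    rcases eq_or_ne (k*l) 0 with hkl | hkl
    · rw [hkl] at hkvc; simp at hkvc
    · have h1 : (1:ℝ) ≤ ‖((k*l : ℤ):ℂ)‖ := by
        rw [show ((k*l:ℤ):ℂ) = (((k*l:ℤ):ℝ):ℂ) by push_cast; ring, Complex.norm_real,
          Real.norm_eq_abs]
        have : (1:ℤ) ≤ |k*l| := Int.one_le_abs hkl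
        exact_mod_cast this
      have h2 : ‖((k*l : ℤ):ℂ) * v^2‖ = 2 := by rw [hkvc]; norm_num
      rw [norm_mul, norm_pow] at h2
      nlinarith
  -- no λ-quiddity of size 3
  have hno3 : ∀ x y z : ℂ, y ∈ subgroupGen w → ¬(Mlist [x,y,z] = 1 ∨ Mlist [x,y,z] = -1) := by
    rintro x y z ⟨k, rfl⟩ hM
    apply hnounit k
    rcases hM with h | h
    · right
      have := congrFun (congrFun h 1) 1
      rw [aux_Mlist3] at this
      simp [Matrix.one_apply] at this
      linear_combination -this
    · left
      have := congrFun (congrFun h 1) 1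
      rw [aux_Mlist3] at this
      simp [Matrix.one_apply] at this
      linear_combination this
  ext c
  simp only [Set.mem_setOf_eq, Set.mem_union]
  constructor
  · rintro ⟨⟨hne, hmem, hM⟩, hlen, hnred⟩
    have hcase : c.length = 3 ∨ c.length = 4 ∨ 5 ≤ c.length := by omega
    rcases hcase with h3 | h4 | h5
    · obtain ⟨x, y, z, rfl⟩ := List.length_eq_three.mp h3
      exact absurd hM (hno3 x y z (hmem y (by simp)))
    · obtain ⟨x, y, z, t, rfl⟩ := aux_length_eq_four h4
      rw [aux_Mlist4] at hM
      rcases hM with h | h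
      · have h11 : 1 - z*y = 1 := by
          have := congrFun (congrFun h 1) 1
          simpa [Matrix.one_apply] using this
        have hzy : z * y = 0 := by linear_combination -h11
        have h10 : z*(y*x-1) - x = 0 := by
          have := congrFun (congrFun h 1) 0
          simpa [Matrix.one_apply] using this
        have h01 : t*(1-z*y)+y = 0 := by
          have := congrFun (congrFun h 0) 1
          simpa [Matrix.one_apply] using this
        rcases mul_eq_zero.mp hzy with hz | hy
        · -- z = 0 : c = [0, y, 0, -y]
          left
          obtain ⟨k, hk⟩ := hmem y (by simp)
          have hx0 : x = 0 := by
            rw [hz] at h10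
            linear_combination -h10
          have ht : t = -y := by
            rw [hz] at h01
            linear_combination h01
          refine ⟨k, ?_⟩
          rw [hx0, hz, ht, hk]
        · -- y = 0 : c = [x, 0, -x, 0]
          right
          obtain ⟨k, hk⟩ := hmem x (by simp)
          have hzx : z = -x := by
            rw [hy] at h10
            linear_combination -h10
          have ht : t = 0 := by
            rw [hy] at h01
            simpa using h01
          refine ⟨k, ?_⟩
          rw [hy, hzx, ht, hk]
      · exfalso
        have h11 : 1 - z*y = -1 := by
          have := congrFun (congrFun h 1) 1
          simpa [Matrix.one_apply] using this
        have hzy : z * y = 2 := by linear_combination -h11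
        obtain ⟨k, hk⟩ := hmem z (by simp)
        obtain ⟨l, hl⟩ := hmem y (by simp)
        apply hnotwo k l
        rw [← hk, ← hl]
        linear_combination hzy
    · by_cases hz : ∀ x ∈ c, x ≠ 0
      · exfalso
        obtain ⟨ks, rfl⟩ := exists_intList hmem
        have hne' : ks.map (fun k : ℤ => (k:ℂ) * v) ≠ [] := by
          intro h
          apply hne
          simp at h
          simp [h]
        have hM' := Mlist_transfer htr ks hM
        apply aux_Mlist_ne_pm_one _ hne' _ hM'
        intro x hx'
        simp only [List.mem_map] at hx'
        obtain ⟨k, hkmem, rfl⟩ := hx'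
        apply hkv
        intro hk0
        apply hz ((k:ℂ) * w) (List.mem_map_of_mem hkmem)
        rw [hk0]
        simp
      · push_neg at hz
        obtain ⟨x, hxc, hx0⟩ := hz
        rw [hx0] at hxc
        exact absurd
          (reducible_of_zero (show (0:ℂ) ∈ subgroupGen w from ⟨0, by simp⟩)
            (by rintro _ _ ⟨k, rfl⟩ ⟨l, rfl⟩; exact ⟨k + l, by push_cast; ring⟩)
            (by rintro _ ⟨k, rfl⟩; exact ⟨-k, by push_cast; ring⟩)
            hmem h5 hxc) hnred
  · -- easy inclusion
    have hmain : ∀ k : ℤ, ∀ c' : List ℂ,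
        (c' = [0, (k:ℂ)*w, 0, -((k:ℂ)*w)] ∨ c' = [(k:ℂ)*w, 0, -((k:ℂ)*w), 0]) →
        IrreducibleQuiddity (subgroupGen w) c' := by
      intro k c' hc'
      have hmemc : ∀ x ∈ c', x ∈ subgroupGen w := by
        intro x hx'
        rcases hc' with rfl | rfl <;> simp at hx' <;>
          rcases hx' with rfl | rfl | rfl | rfl
        exacts [⟨0, by simp⟩, ⟨k, rfl⟩, ⟨0, by simp⟩, ⟨-k, by push_cast; ring⟩,
          ⟨k, rfl⟩, ⟨0, by simp⟩, ⟨-k, by push_cast; ring⟩, ⟨0, by simp⟩]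
      refine ⟨⟨by rcases hc' with rfl | rfl <;> simp, hmemc, ?_⟩,
        by rcases hc' with rfl | rfl <;> simp, ?_⟩
      · left
        rcases hc' with rfl | rfl
        · exact aux_quid1 _
        · exact aux_quid2 _
      · rintro ⟨a, b, haR, ⟨hbne, hbmem, hbM⟩, ha3, hb3, hce⟩
        have hlen4 : c'.length = 4 := by rcases hc' with rfl | rfl <;> simp
        have hoplen : (oplus a b).length = a.length + b.length - 2 :=
          oplus_length (by omega) (by omega)
        have hlena : c'.length = (oplus a b).length := cyclicEquiv_length hce
        have hb3' : b.length = 3 := by omega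
        obtain ⟨x, y, z, rfl⟩ := List.length_eq_three.mp hb3'
        exact hno3 x y z (hbmem y (by simp)) hbM
    rintro (⟨k, rfl⟩ | ⟨k, rfl⟩)
    · exact hmain k _ (Or.inl rfl)
    · exact hmain k _ (Or.inr rfl)
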